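/- (Difference of consecutive local averages.) Assume ℓ ≥ 2. For every φ : ℤ/kℤ → ℝ, Σ_{i∈ℤ/kℤ} Σ_{j=1}^{ℓ−1} (a(i,j+1) − a(i,j))² ≤ (112/9) · |φ|_Γ². -/

import Mathlib

open Real Finset

noncomputable section

/-- The cycle distance on `ℤ/kℤ`. -/
def cycDist (k : ℕ) (p q : ZMod k) : ℕ := min (p - q).val (q - p).val

/-- The boundary seminorm squared, summed over unordered pairs of distinct elements. -/
def bSemiSq (k : ℕ) [NeZero k] (φ : ZMod k → ℝ) : ℝ :=
  (1 / 2) * ∑ p : ZMod k, ∑ q : ZMod k,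
    if p ≠ q then (φ p - φ q) ^ 2 / (cycDist k p q : ℝ) ^ 2 else 0

/-- The local average `a(i,j) = (1/(2j−1)) Σ_{h=−(j−1)}^{j−1} φ(i+h)`. -/
def localAvg (k : ℕ) (φ : ZMod k → ℝ) (i : ZMod k) (j : ℕ) : ℝ :=
  (1 / (2 * (j : ℝ) - 1)) * ∑ h ∈ Finset.Icc (-(j : ℤ) + 1) ((j : ℤ) - 1), φ (i + (h : ZMod k))

namespace CLAD

set_option linter.unusedSectionVars false

variable {k : ℕ} [NeZero k]

lemma natcast_ne (m : ℕ) (hm : 0 < m) (hmk : m < k) : (m : ZMod k) ≠ 0 := by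
  intro h
  have := ZMod.val_natCast_of_lt hmk
  rw [h, ZMod.val_zero] at this
  omega

lemma cycDist_add (m : ℕ) (hm : 0 < m) (hmk : 2 * m < k) (p : ZMod k) :
    cycDist k p (p + (m : ZMod k)) = m := by
  have hmk' : m < k := by omega
  have h1 : p - (p + (m : ZMod k)) = -(m : ZMod k) := by ring
  have h2 : (p + (m : ZMod k)) - p = (m : ZMod k) := by ring
  rw [cycDist, h1, h2, ZMod.neg_val, if_neg (natcast_ne m hm hmk'),
    ZMod.val_natCast_of_lt hmk']
  omega

lemma ne_add (m : ℕ) (hm : 0 < m) (hmk : m < k) (p : ZMod k) : p ≠ p + (m : ZMod k) := by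
  intro h
  exact natcast_ne m hm hmk (by linear_combination -h)

/-- Sum shift over `ZMod k`. -/
lemma sum_shift (f : ZMod k → ℝ) (b : ZMod k) : ∑ i : ZMod k, f (i + b) = ∑ p : ZMod k, f p :=
  Fintype.sum_equiv (Equiv.addRight b) _ _ (fun _ => rfl)

/-- `Wm φ m = Σ_p (φ(p+m) − φ(p))²`. -/
def Wm (k : ℕ) [NeZero k] (φ : ZMod k → ℝ) (m : ZMod k) : ℝ :=
  ∑ p : ZMod k, (φ (p + m) - φ p) ^ 2

lemma W_shift (φ : ZMod k → ℝ) (a b : ZMod k) :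
    ∑ i : ZMod k, (φ (i + a) - φ (i + b)) ^ 2 = Wm k φ (a - b) := by
  rw [Wm, ← sum_shift (fun p => (φ (p + (a - b)) - φ p) ^ 2) b]
  apply Finset.sum_congr rfl
  intro i _
  have : i + b + (a - b) = i + a := by ring
  rw [this]

lemma W_neg (φ : ZMod k → ℝ) (m : ZMod k) : Wm k φ (-m) = Wm k φ m := by
  rw [Wm, Wm, ← sum_shift (fun p => (φ (p + -m) - φ p) ^ 2) m]
  apply Finset.sum_congr rfl
  intro i _
  have : i + m + -m = i := by ring
  rw [this]
  ring

/-- `Tm φ m = Σ_p Q(p, p+m)`. -/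
def Tm (k : ℕ) [NeZero k] (φ : ZMod k → ℝ) (m : ℕ) : ℝ :=
  ∑ p : ZMod k, (φ p - φ (p + (m : ZMod k))) ^ 2 / (cycDist k p (p + (m : ZMod k)) : ℝ) ^ 2

lemma Tm_nonneg (φ : ZMod k → ℝ) (m : ℕ) : 0 ≤ Tm k φ m := by
  apply Finset.sum_nonneg
  intro p _
  positivity

lemma W_eq_T (φ : ZMod k → ℝ) (m : ℕ) (hm : 1 ≤ m) (hmk : 2 * m < k) :
    Wm k φ ((m : ZMod k)) = (m : ℝ) ^ 2 * Tm k φ m := by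
  rw [Wm, Tm, Finset.mul_sum]
  apply Finset.sum_congr rfl
  intro p _
  rw [cycDist_add m (by omega) hmk]
  have hm0 : ((m : ℕ) : ℝ) ≠ 0 := by positivity
  field_simp
  ring

lemma bSemiSq_nonneg (φ : ZMod k → ℝ) : 0 ≤ bSemiSq k φ := by
  rw [bSemiSq]
  apply mul_nonneg (by norm_num)
  apply Finset.sum_nonneg; intro p _
  apply Finset.sum_nonneg; intro q _
  split <;> positivity

/-- The sum of `Tm` over short distances is at most twice the seminorm. -/
lemma T_sum_le (φ : ZMod k → ℝ) (M : ℕ) (hMk : 2 * M < k) :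
    ∑ m ∈ Icc 1 M, Tm k φ m ≤ 2 * bSemiSq k φ := by
  have h2 : 2 * bSemiSq k φ = ∑ p : ZMod k, ∑ q : ZMod k,
      if p ≠ q then (φ p - φ q) ^ 2 / (cycDist k p q : ℝ) ^ 2 else 0 := by
    rw [bSemiSq]; ring
  rw [h2]
  simp only [Tm]
  rw [Finset.sum_comm]
  apply Finset.sum_le_sum
  intro p _
  -- fix p; sum over m ∈ Icc 1 M of Q p (p+m) ≤ sum over all q of ite
  have key : ∑ m ∈ Icc 1 M, (φ p - φ (p + (m : ZMod k))) ^ 2 / (cycDist k p (p + (m : ZMod k)) : ℝ) ^ 2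
      = ∑ q ∈ (Icc 1 M).image (fun m : ℕ => p + (m : ZMod k)),
          (if p ≠ q then (φ p - φ q) ^ 2 / (cycDist k p q : ℝ) ^ 2 else 0) := by
    rw [Finset.sum_image]
    · apply Finset.sum_congr rfl
      intro m hm
      simp only [Finset.mem_Icc] at hm
      rw [if_pos (ne_add m (by omega) (by omega) p)]
    · intro m₁ hm₁ m₂ hm₂ h
      simp only [Finset.mem_coe, Finset.mem_Icc] at hm₁ hm₂
      have : (m₁ : ZMod k) = (m₂ : ZMod k) := by
        have := congrArg (fun x => x - p) h
        simpa using this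
      have h1 := ZMod.val_natCast_of_lt (show m₁ < k by omega)
      have h2 := ZMod.val_natCast_of_lt (show m₂ < k by omega)
      rw [← h1, ← h2, this]
  rw [key]
  apply Finset.sum_le_sum_of_subset_of_nonneg (Finset.subset_univ _)
  intro q _ _
  split <;> positivity

lemma card_Icc_int (j : ℕ) (hj : 1 ≤ j) :
    ((Icc (-(j:ℤ)+1) ((j:ℤ)-1)).card : ℝ) = 2*(j:ℝ) - 1 := by
  rw [Int.card_Icc]
  have : ((j:ℤ) - 1 + 1 - (-(j:ℤ)+1)).toNat = 2*j - 1 := by omega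
  rw [this]
  push_cast [Nat.cast_sub (by omega : 1 ≤ 2*j)]
  ring

lemma diff_eq (φ : ZMod k → ℝ) (i : ZMod k) (j : ℕ) (hj : 1 ≤ j) :
    localAvg k φ i (j+1) - localAvg k φ i j
      = (2/((2*(j:ℝ)+1)*(2*(j:ℝ)-1))) * ∑ h ∈ Icc (-(j:ℤ)+1) ((j:ℤ)-1),
          ((φ (i + (((j:ℤ) : ZMod k))) + φ (i + (((-(j:ℤ)) : ZMod k))))/2 - φ (i + (h : ZMod k))) := by
  have hj' : (1:ℤ) ≤ (j:ℤ) := by exact_mod_cast hj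
  unfold localAvg
  have hset : Icc (-((j+1 : ℕ) : ℤ) + 1) (((j+1 : ℕ) : ℤ) - 1) = Icc (-(j:ℤ)) ((j:ℤ)) := by
    congr 1 <;> push_cast <;> ring
  have hins : Icc (-(j:ℤ)) ((j:ℤ)) = insert (-(j:ℤ)) (insert ((j:ℤ)) (Icc (-(j:ℤ)+1) ((j:ℤ)-1))) := by
    ext x; simp only [Finset.mem_Icc, Finset.mem_insert]; omega
  have hsplit : ∑ h ∈ Icc (-((j+1 : ℕ) : ℤ) + 1) (((j+1 : ℕ) : ℤ) - 1), φ (i + (h : ZMod k))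
      = φ (i + (((-(j:ℤ)) : ZMod k))) + φ (i + (((j:ℤ) : ZMod k)))
        + ∑ h ∈ Icc (-(j:ℤ)+1) ((j:ℤ)-1), φ (i + (h : ZMod k)) := by
    rw [hset, hins, Finset.sum_insert (by simp only [Finset.mem_insert, Finset.mem_Icc]; omega),
      Finset.sum_insert (by simp only [Finset.mem_Icc]; omega)]
    push_cast
    ring
  have hcard := card_Icc_int j hj
  rw [hsplit, Finset.sum_sub_distrib, Finset.sum_const, nsmul_eq_mul, hcard]
  have h1 : 2*(j:ℝ)+1 ≠ 0 := by positivity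
  have h2 : 2*(j:ℝ)-1 ≠ 0 := by
    have : (1:ℝ) ≤ (j:ℝ) := by exact_mod_cast hj
    nlinarith
  have h3 : 2*((j:ℝ)+1)-1 = 2*(j:ℝ)+1 := by ring
  push_cast [h3]
  field_simp
  ring

lemma cs_pair (s : Finset ℤ) (f : ℤ → ℝ) (x y : ℝ) :
    (∑ h ∈ s, ((x + y)/2 - f h))^2 ≤ (s.card : ℝ) * ∑ h ∈ s, ((x - f h)^2 + (y - f h)^2)/2 := by
  have hC := Finset.sum_mul_sq_le_sq_mul_sq s (fun h => (x + y)/2 - f h) (fun _ => 1)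
  simp only [mul_one, one_pow, Finset.sum_const, nsmul_eq_mul] at hC
  have hterm : ∑ h ∈ s, ((x + y)/2 - f h)^2 ≤ ∑ h ∈ s, ((x - f h)^2 + (y - f h)^2)/2 := by
    apply Finset.sum_le_sum
    intro h _
    nlinarith [sq_nonneg ((x - f h) - (y - f h))]
  calc (∑ h ∈ s, ((x + y)/2 - f h))^2 ≤ (∑ h ∈ s, ((x + y)/2 - f h)^2) * s.card := hC
    _ = (s.card : ℝ) * ∑ h ∈ s, ((x + y)/2 - f h)^2 := by ring
    _ ≤ (s.card : ℝ) * ∑ h ∈ s, ((x - f h)^2 + (y - f h)^2)/2 :=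
        mul_le_mul_of_nonneg_left hterm (by positivity)

lemma diff_sq_le (φ : ZMod k → ℝ) (i : ZMod k) (j : ℕ) (hj : 1 ≤ j) :
    (localAvg k φ i (j+1) - localAvg k φ i j)^2
      ≤ (2/((2*(j:ℝ)+1)^2*(2*(j:ℝ)-1))) * ∑ h ∈ Icc (-(j:ℤ)+1) ((j:ℤ)-1),
          ((φ (i + (((j:ℤ) : ZMod k))) - φ (i + (h : ZMod k)))^2
            + (φ (i + (((-(j:ℤ)) : ZMod k))) - φ (i + (h : ZMod k)))^2) := by
  have hjR : (1:ℝ) ≤ (j:ℝ) := by exact_mod_cast hj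
  have h1 : 2*(j:ℝ)+1 > 0 := by positivity
  have h2 : 2*(j:ℝ)-1 > 0 := by nlinarith
  rw [diff_eq φ i j hj, mul_pow]
  have hCS := cs_pair (Icc (-(j:ℤ)+1) ((j:ℤ)-1)) (fun h => φ (i + (h : ZMod k)))
      (φ (i + (((j:ℤ) : ZMod k)))) (φ (i + (((-(j:ℤ)) : ZMod k))))
  rw [card_Icc_int j hj] at hCS
  calc (2/((2*(j:ℝ)+1)*(2*(j:ℝ)-1)))^2 * (∑ h ∈ Icc (-(j:ℤ)+1) ((j:ℤ)-1),
          ((φ (i + (((j:ℤ) : ZMod k))) + φ (i + (((-(j:ℤ)) : ZMod k))))/2 - φ (i + (h : ZMod k))))^2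
      ≤ (2/((2*(j:ℝ)+1)*(2*(j:ℝ)-1)))^2 * ((2*(j:ℝ)-1) * ∑ h ∈ Icc (-(j:ℤ)+1) ((j:ℤ)-1),
          ((φ (i + (((j:ℤ) : ZMod k))) - φ (i + (h : ZMod k)))^2
            + (φ (i + (((-(j:ℤ)) : ZMod k))) - φ (i + (h : ZMod k)))^2)/2) :=
        mul_le_mul_of_nonneg_left hCS (by positivity)
    _ = (2/((2*(j:ℝ)+1)^2*(2*(j:ℝ)-1))) * ∑ h ∈ Icc (-(j:ℤ)+1) ((j:ℤ)-1),
          ((φ (i + (((j:ℤ) : ZMod k))) - φ (i + (h : ZMod k)))^2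
            + (φ (i + (((-(j:ℤ)) : ZMod k))) - φ (i + (h : ZMod k)))^2) := by
        rw [← Finset.sum_div]
        field_simp



lemma inner_eq (φ : ZMod k → ℝ) (j : ℕ) (hj : 1 ≤ j) (hk : 2*(2*j-1) < k) :
    ∑ i : ZMod k, ∑ h ∈ Icc (-(j:ℤ)+1) ((j:ℤ)-1),
        ((φ (i + (((j:ℤ) : ZMod k))) - φ (i + (h : ZMod k)))^2
          + (φ (i + (((-(j:ℤ)) : ZMod k))) - φ (i + (h : ZMod k)))^2)
      = 2 * ∑ m ∈ Icc 1 (2*j-1), (m:ℝ)^2 * Tm k φ m := by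
  rw [Finset.sum_comm]
  have hA : ∀ h ∈ Icc (-(j:ℤ)+1) ((j:ℤ)-1),
      ∑ i : ZMod k, ((φ (i + (((j:ℤ) : ZMod k))) - φ (i + (h : ZMod k)))^2
          + (φ (i + (((-(j:ℤ)) : ZMod k))) - φ (i + (h : ZMod k)))^2)
        = Wm k φ ((((j:ℤ) - h : ℤ)) : ZMod k) + Wm k φ ((((j:ℤ) + h : ℤ)) : ZMod k) := by
    intro h _
    rw [Finset.sum_add_distrib, W_shift, W_shift]
    congr 1
    · congr 1
      push_cast
      ring
    · rw [show (((-(j:ℤ)) : ZMod k)) - ((h : ZMod k)) = -((((j:ℤ) + h : ℤ)) : ZMod k) by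
        push_cast; ring, W_neg]
  rw [Finset.sum_congr rfl hA, Finset.sum_add_distrib]
  have eT : ∀ m ∈ Icc 1 (2*j-1), Wm k φ ((m : ZMod k)) = (m:ℝ)^2 * Tm k φ m := by
    intro m hm
    simp only [Finset.mem_Icc] at hm
    exact W_eq_T φ m hm.1 (by omega)
  have e1 : ∑ h ∈ Icc (-(j:ℤ)+1) ((j:ℤ)-1), Wm k φ ((((j:ℤ) - h : ℤ)) : ZMod k)
      = ∑ m ∈ Icc 1 (2*j-1), (m:ℝ)^2 * Tm k φ m := by
    rw [← Finset.sum_congr rfl eT]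
    apply Finset.sum_nbij' (i := fun h => ((j:ℤ) - h).toNat) (j := fun m => (j:ℤ) - (m : ℕ))
    · intro h hh
      simp only [Finset.mem_Icc] at hh ⊢
      omega
    · intro m hm
      simp only [Finset.mem_Icc] at hm ⊢
      omega
    · intro h hh
      simp only [Finset.mem_Icc] at hh
      omega
    · intro m hm
      simp only [Finset.mem_Icc] at hm
      omega
    · intro h hh
      simp only [Finset.mem_Icc] at hh
      have hnn : ((((j:ℤ) - h).toNat : ℕ) : ℤ) = (j:ℤ) - h := Int.toNat_of_nonneg (by omega)
      congr 1
      exact_mod_cast congrArg (fun t : ℤ => (t : ZMod k)) hnn.symm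
  have e2 : ∑ h ∈ Icc (-(j:ℤ)+1) ((j:ℤ)-1), Wm k φ ((((j:ℤ) + h : ℤ)) : ZMod k)
      = ∑ m ∈ Icc 1 (2*j-1), (m:ℝ)^2 * Tm k φ m := by
    rw [← Finset.sum_congr rfl eT]
    apply Finset.sum_nbij' (i := fun h => ((j:ℤ) + h).toNat) (j := fun m => (m : ℕ) - (j:ℤ))
    · intro h hh
      simp only [Finset.mem_Icc] at hh ⊢
      omega
    · intro m hm
      simp only [Finset.mem_Icc] at hm ⊢
      omega
    · intro h hh
      simp only [Finset.mem_Icc] at hh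
      omega
    · intro m hm
      simp only [Finset.mem_Icc] at hm
      omega
    · intro h hh
      simp only [Finset.mem_Icc] at hh
      have hnn : ((((j:ℤ) + h).toNat : ℕ) : ℤ) = (j:ℤ) + h := Int.toNat_of_nonneg (by omega)
      congr 1
      exact_mod_cast congrArg (fun t : ℤ => (t : ZMod k)) hnn.symm
  rw [e1, e2]
  ring

lemma per_j (φ : ZMod k → ℝ) (j : ℕ) (hj : 1 ≤ j) (hk : 2*(2*j-1) < k) :
    ∑ i : ZMod k, (localAvg k φ i (j+1) - localAvg k φ i j)^2
      ≤ (2/((2*(j:ℝ)+1)^2*(2*(j:ℝ)-1))) * (2 * ∑ m ∈ Icc 1 (2*j-1), (m:ℝ)^2 * Tm k φ m) := by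
  calc ∑ i : ZMod k, (localAvg k φ i (j+1) - localAvg k φ i j)^2
      ≤ ∑ i : ZMod k, (2/((2*(j:ℝ)+1)^2*(2*(j:ℝ)-1))) * ∑ h ∈ Icc (-(j:ℤ)+1) ((j:ℤ)-1),
          ((φ (i + (((j:ℤ) : ZMod k))) - φ (i + (h : ZMod k)))^2
            + (φ (i + (((-(j:ℤ)) : ZMod k))) - φ (i + (h : ZMod k)))^2) :=
        Finset.sum_le_sum (fun i _ => diff_sq_le φ i j hj)
    _ = (2/((2*(j:ℝ)+1)^2*(2*(j:ℝ)-1))) * ∑ i : ZMod k, ∑ h ∈ Icc (-(j:ℤ)+1) ((j:ℤ)-1),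
          ((φ (i + (((j:ℤ) : ZMod k))) - φ (i + (h : ZMod k)))^2
            + (φ (i + (((-(j:ℤ)) : ZMod k))) - φ (i + (h : ZMod k)))^2) := by
        rw [← Finset.mul_sum]
    _ = (2/((2*(j:ℝ)+1)^2*(2*(j:ℝ)-1))) * (2 * ∑ m ∈ Icc 1 (2*j-1), (m:ℝ)^2 * Tm k φ m) := by
        rw [inner_eq φ j hj hk]


lemma telescope (G : ℕ → ℝ) (L : ℕ) :
    ∑ j ∈ Icc 1 L, (G j - G (j+1)) = G 1 - G (L+1) := by
  induction L with
  | zero => norm_num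
  | succ n ih => rw [Finset.sum_Icc_succ_top (by omega), ih]; ring

lemma coef_le (m L : ℕ) (hm : 1 ≤ m) :
    ∑ j ∈ Icc 1 L, (if m ≤ 2*j - 1 then 4*(m:ℝ)^2/((2*(j:ℝ)+1)^2*(2*(j:ℝ)-1)) else 0) ≤ 1 := by
  set G : ℕ → ℝ := fun j => min ((m:ℝ)^2/(2*(j:ℝ)-1)^2) 1 with hG
  have hGsucc : ∀ j : ℕ, G (j+1) = min ((m:ℝ)^2/(2*(j:ℝ)+1)^2) 1 := by
    intro j
    simp only [hG]
    congr 2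
    push_cast
    ring
  have hstep : ∀ j ∈ Icc 1 L,
      (if m ≤ 2*j - 1 then 4*(m:ℝ)^2/((2*(j:ℝ)+1)^2*(2*(j:ℝ)-1)) else 0) ≤ G j - G (j+1) := by
    intro j hj
    simp only [Finset.mem_Icc] at hj
    have hjR : (1:ℝ) ≤ (j:ℝ) := by exact_mod_cast hj.1
    have p1 : (0:ℝ) < 2*(j:ℝ)-1 := by nlinarith
    have p2 : (0:ℝ) < 2*(j:ℝ)+1 := by positivity
    rw [hGsucc j]
    by_cases hcase : m ≤ 2*j - 1
    · rw [if_pos hcase]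
      have hmR : (m:ℝ) ≤ 2*(j:ℝ) - 1 := by
        have : (m:ℕ) + 1 ≤ 2*j := by omega
        have := (Nat.cast_le (α := ℝ)).mpr this
        push_cast at this
        linarith
      have hm1 : (1:ℝ) ≤ (m:ℝ) := by exact_mod_cast hm
      have g1 : (m:ℝ)^2/(2*(j:ℝ)-1)^2 ≤ 1 := by
        rw [div_le_one (by positivity)]
        nlinarith
      have g2 : (m:ℝ)^2/(2*(j:ℝ)+1)^2 ≤ 1 := by
        rw [div_le_one (by positivity)]
        nlinarith
      rw [show G j = min ((m:ℝ)^2/(2*(j:ℝ)-1)^2) 1 from rfl, min_eq_left g1, min_eq_left g2]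
      have expand : (m:ℝ)^2/(2*(j:ℝ)-1)^2 - (m:ℝ)^2/(2*(j:ℝ)+1)^2
            - 4*(m:ℝ)^2/((2*(j:ℝ)+1)^2*(2*(j:ℝ)-1))
          = 4*(m:ℝ)^2/((2*(j:ℝ)-1)^2*(2*(j:ℝ)+1)^2) := by
        field_simp
        ring
      have hpos : (0:ℝ) ≤ 4*(m:ℝ)^2/((2*(j:ℝ)-1)^2*(2*(j:ℝ)+1)^2) := by positivity
      linarith
    · rw [if_neg hcase, sub_nonneg]
      apply min_le_min _ le_rfl
      rw [div_le_div_iff₀ (by positivity) (by positivity)]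
      nlinarith [sq_nonneg (m:ℝ)]
  calc ∑ j ∈ Icc 1 L, (if m ≤ 2*j - 1 then 4*(m:ℝ)^2/((2*(j:ℝ)+1)^2*(2*(j:ℝ)-1)) else 0)
      ≤ ∑ j ∈ Icc 1 L, (G j - G (j+1)) := Finset.sum_le_sum hstep
    _ = G 1 - G (L+1) := telescope G L
    _ ≤ 1 := by
        have h1 : G 1 ≤ 1 := min_le_right _ _
        have h2 : 0 ≤ G (L+1) := le_min (by positivity) (by norm_num)
        linarith

end CLAD

theorem consecutive_local_average_difference (k ℓ c : ℕ) [NeZero k]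
    (h1 : 4 * ℓ < k) (h2 : k < 2 * c * ℓ) (hℓ : 2 ≤ ℓ)
    (φ : ZMod k → ℝ) :
    ∑ i : ZMod k, ∑ j ∈ Finset.Icc 1 (ℓ - 1),
      (localAvg k φ i (j + 1) - localAvg k φ i j) ^ 2
      ≤ (112 / 9) * bSemiSq k φ := by
  classical
  rw [Finset.sum_comm]
  calc ∑ j ∈ Icc 1 (ℓ-1), ∑ i : ZMod k, (localAvg k φ i (j+1) - localAvg k φ i j)^2
      ≤ ∑ j ∈ Icc 1 (ℓ-1), (2/((2*(j:ℝ)+1)^2*(2*(j:ℝ)-1)))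
          * (2 * ∑ m ∈ Icc 1 (2*j-1), (m:ℝ)^2 * CLAD.Tm k φ m) := by
        apply Finset.sum_le_sum
        intro j hj
        simp only [Finset.mem_Icc] at hj
        exact CLAD.per_j φ j hj.1 (by omega)
    _ = ∑ j ∈ Icc 1 (ℓ-1), ∑ m ∈ Icc 1 (2*(ℓ-1)-1),
          (if m ≤ 2*j-1 then (4*(m:ℝ)^2/((2*(j:ℝ)+1)^2*(2*(j:ℝ)-1))) * CLAD.Tm k φ m else 0) := by
        apply Finset.sum_congr rfl
        intro j hj
        simp only [Finset.mem_Icc] at hj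
        rw [← Finset.sum_filter]
        have hfil : (Icc 1 (2*(ℓ-1)-1)).filter (fun m => m ≤ 2*j-1) = Icc 1 (2*j-1) := by
          ext x
          simp only [Finset.mem_filter, Finset.mem_Icc]
          omega
        rw [hfil, Finset.mul_sum, Finset.mul_sum]
        apply Finset.sum_congr rfl
        intro m _
        ring
    _ = ∑ m ∈ Icc 1 (2*(ℓ-1)-1), (∑ j ∈ Icc 1 (ℓ-1),
          (if m ≤ 2*j-1 then 4*(m:ℝ)^2/((2*(j:ℝ)+1)^2*(2*(j:ℝ)-1)) else 0)) * CLAD.Tm k φ m := by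
        rw [Finset.sum_comm]
        apply Finset.sum_congr rfl
        intro m _
        rw [Finset.sum_mul]
        apply Finset.sum_congr rfl
        intro j _
        by_cases hc : m ≤ 2*j-1 <;> simp [hc]
    _ ≤ ∑ m ∈ Icc 1 (2*(ℓ-1)-1), 1 * CLAD.Tm k φ m := by
        apply Finset.sum_le_sum
        intro m hm
        simp only [Finset.mem_Icc] at hm
        exact mul_le_mul_of_nonneg_right (CLAD.coef_le m (ℓ-1) hm.1) (CLAD.Tm_nonneg φ m)
    _ = ∑ m ∈ Icc 1 (2*(ℓ-1)-1), CLAD.Tm k φ m := by simp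
    _ ≤ 2 * bSemiSq k φ := CLAD.T_sum_le φ (2*(ℓ-1)-1) (by omega)
    _ ≤ (112/9) * bSemiSq k φ := by nlinarith [CLAD.bSemiSq_nonneg φ]
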